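/- Let (Ω, 𝓕, P) be a probability space and (A_i)_{i∈ℕ} a sequence of measurable events. Then P(⋂_{i=0}^∞ A_i) > 0 if and only if both of the following hold: (a) P(A_i^c | ⋂_{j=0}^{i−1} A_j) < 1 for every i ≥ 0, and (b) ∑_{i=0}^∞ P(A_i^c | ⋂_{j=0}^{i−1} A_j) < ∞. Here the intersection over the empty index set is Ω, so the i = 0 term is P(A_0^c), and the conditional probability given an event of probability zero is taken to be 0 (under condition (a) every conditioning event ⋂_{j<i} A_j automatically has positive probability, so this convention plays no role). -/

import Mathlib

open MeasureTheory ProbabilityTheory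
open scoped ENNReal

/-- for events `(A_i)` in a probability space,
`P(⋂_i A_i) > 0` iff `P(A_i^c | ⋂_{j<i} A_j) < 1` for every `i` and
`∑_i P(A_i^c | ⋂_{j<i} A_j) < ∞`. Here `ProbabilityTheory.cond P s` is the
conditional measure `P(· ∩ s)/P(s)`, which is the zero measure when `P s = 0`
(matching the convention in the statement), and `⋂ j ∈ Finset.range 0, A j = univ`. -/
theorem inter_pos_iff_cond_compl_summable {Ω : Type*} [MeasurableSpace Ω]
    (P : Measure Ω) [IsProbabilityMeasure P]
    (A : ℕ → Set Ω) (hA : ∀ i, MeasurableSet (A i)) :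
    0 < P (⋂ i, A i) ↔
      ((∀ i : ℕ, ProbabilityTheory.cond P (⋂ j ∈ Finset.range i, A j) (A i)ᶜ < 1) ∧
        ∑' i : ℕ, ProbabilityTheory.cond P (⋂ j ∈ Finset.range i, A j) (A i)ᶜ < ⊤) := by
  classical
  set B : ℕ → Set Ω := fun n => ⋂ j ∈ Finset.range n, A j with hB
  set q : ℕ → ℝ≥0∞ := fun n => ProbabilityTheory.cond P (B n) ((A n)ᶜ) with hq
  have hBm : ∀ n, MeasurableSet (B n) := fun n =>
    MeasurableSet.biInter (Finset.range n).countable_toSet (fun j _ => hA j)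
  have hBfin : ∀ n, P (B n) ≠ ⊤ := fun n => (measure_lt_top P _).ne
  have hBsucc : ∀ n, B (n + 1) = B n ∩ A n := by
    intro n
    simp only [hB, Finset.range_add_one, Finset.set_biInter_insert]
    exact Set.inter_comm _ _
  have hBanti : Antitone B := antitone_nat_of_succ_le fun n => by
    rw [hBsucc]; exact Set.inter_subset_left
  have hmul : ∀ n, q n * P (B n) = P (B n ∩ (A n)ᶜ) := by
    intro n
    rcases eq_or_ne (P (B n)) 0 with h0 | h0
    · have h1 : P (B n ∩ (A n)ᶜ) = 0 :=
        le_antisymm (h0 ▸ measure_mono Set.inter_subset_left) (zero_le)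
      simp only [hq]
      simp [ProbabilityTheory.cond_apply (hBm n), h0, h1]
    · simp only [hq]
      rw [ProbabilityTheory.cond_apply (hBm n), mul_comm ((P (B n))⁻¹) _, mul_assoc,
        ENNReal.inv_mul_cancel h0 (hBfin n), mul_one]
  have hmulfin : ∀ n, q n * P (B n) ≠ ⊤ := fun n => by
    rw [hmul]; exact (measure_lt_top P _).ne
  have hstep : ∀ n, q n * P (B n) + P (B (n + 1)) = P (B n) := by
    intro n
    rw [hmul, hBsucc, ← Set.diff_eq, add_comm]
    exact measure_inter_add_diff (B n) (hA n)
  have hkey : ∀ N M, (∑ n ∈ Finset.Ico N (N + M), q n * P (B n)) + P (B (N + M)) = P (B N) := by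
    intro N M
    induction M with
    | zero => simp
    | succ M ih =>
      rw [show N + (M + 1) = (N + M) + 1 from rfl,
        Finset.sum_Ico_succ_top (Nat.le_add_right N M), add_assoc, hstep (N + M), ih]
  have hB0 : P (B 0) = 1 := by simp [hB]
  constructor
  · intro hpos
    have hc : ∀ n, P (⋂ i, A i) ≤ P (B n) := fun n =>
      measure_mono (fun x hx => Set.mem_iInter₂.mpr fun j _ => Set.mem_iInter.mp hx j)
    have hqlt : ∀ n, q n < 1 := by
      intro n
      by_contra hq1
      push_neg at hq1
      have h1 : P (B n) ≤ q n * P (B n) := by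
        calc P (B n) = 1 * P (B n) := (one_mul _).symm
          _ ≤ q n * P (B n) := mul_le_mul_left hq1 _
      have h2 : q n * P (B n) + P (B (n + 1)) ≤ q n * P (B n) + 0 := by
        rw [add_zero, hstep n]; exact h1
      have h3 : P (B (n + 1)) = 0 :=
        le_antisymm ((ENNReal.add_le_add_iff_left (hmulfin n)).mp h2) (zero_le)
      have h4 := lt_of_lt_of_le hpos (hc (n + 1))
      rw [h3] at h4
      exact lt_irrefl _ h4
    refine ⟨hqlt, ?_⟩
    have hbound : ∀ N, (∑ n ∈ Finset.range N, q n) * P (⋂ i, A i) ≤ 1 := by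
      intro N
      calc (∑ n ∈ Finset.range N, q n) * P (⋂ i, A i)
          = ∑ n ∈ Finset.range N, q n * P (⋂ i, A i) := Finset.sum_mul _ _ _
        _ ≤ ∑ n ∈ Finset.range N, q n * P (B n) :=
            Finset.sum_le_sum fun n _ => mul_le_mul_right (hc n) _
        _ ≤ (∑ n ∈ Finset.range N, q n * P (B n)) + P (B N) := le_self_add
        _ = P (B 0) := by simpa using hkey 0 N
        _ ≤ 1 := hB0.le
    have htsum : ∑' n, q n ≤ (P (⋂ i, A i))⁻¹ := by
      rw [ENNReal.tsum_eq_iSup_nat]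
      exact iSup_le fun N => ENNReal.le_inv_iff_mul_le.mpr (hbound N)
    exact lt_of_le_of_lt htsum (ENNReal.inv_lt_top.mpr hpos)
  · rintro ⟨hlt, hsum⟩
    have hBpos : ∀ n, 0 < P (B n) := by
      intro n
      induction n with
      | zero => rw [hB0]; exact zero_lt_one
      | succ n ih =>
        rcases eq_or_ne (P (B (n + 1))) 0 with h | h
        · exfalso
          have h1 := hstep n
          rw [h, add_zero] at h1
          have h2 : q n * P (B n) < 1 * P (B n) :=
            ENNReal.mul_lt_mul_left ih.ne' (hBfin n) (hlt n)
          rw [one_mul, h1] at h2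
          exact lt_irrefl _ h2
        · exact pos_iff_ne_zero.mpr h
    obtain ⟨N, hN⟩ : ∃ N, (∑' k, q (k + N)) < 1 := by
      have ht := ENNReal.tendsto_sum_nat_add q hsum.ne
      exact (ht.eventually (gt_mem_nhds (by norm_num : (0 : ℝ≥0∞) < 1))).exists
    set t : ℝ≥0∞ := ∑' k, q (k + N) with htdef
    have hlow : ∀ n, P (B N) * (1 - t) ≤ P (B n) := by
      intro n
      rcases le_or_gt n N with h | h
      · calc P (B N) * (1 - t) ≤ P (B N) * 1 := mul_le_mul_right tsub_le_self _
          _ = P (B N) := mul_one _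
          _ ≤ P (B n) := measure_mono (hBanti h)
      · obtain ⟨M, rfl⟩ : ∃ M, n = N + M := ⟨n - N, (Nat.add_sub_cancel' h.le).symm⟩
        have h1 : P (B N) ≤ P (B N) * t + P (B (N + M)) := by
          calc P (B N) = (∑ i ∈ Finset.Ico N (N + M), q i * P (B i)) + P (B (N + M)) :=
                (hkey N M).symm
            _ ≤ (∑ i ∈ Finset.Ico N (N + M), q i * P (B N)) + P (B (N + M)) := by
                refine add_le_add_left (Finset.sum_le_sum fun i hi => ?_) _
                exact mul_le_mul_right (measure_mono (hBanti (Finset.mem_Ico.mp hi).1)) _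
            _ = (∑ i ∈ Finset.Ico N (N + M), q i) * P (B N) + P (B (N + M)) := by
                rw [Finset.sum_mul]
            _ ≤ t * P (B N) + P (B (N + M)) := by
                gcongr
                rw [htdef, Finset.sum_Ico_eq_sum_range]
                calc ∑ i ∈ Finset.range (N + M - N), q (N + i)
                    = ∑ i ∈ Finset.range (N + M - N), q (i + N) := by
                      refine Finset.sum_congr rfl fun i _ => by rw [Nat.add_comm]
                  _ ≤ ∑' k, q (k + N) := ENNReal.sum_le_tsum _
            _ = P (B N) * t + P (B (N + M)) := by rw [mul_comm]
        have h2 : P (B N) * (1 - t) + P (B N) * t ≤ P (B (N + M)) + P (B N) * t := by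
          rw [← mul_add, tsub_add_cancel_of_le hN.le, mul_one, add_comm (P (B (N + M)))]
          exact h1
        have hfin : P (B N) * t ≠ ⊤ :=
          ENNReal.mul_ne_top (hBfin N) (lt_of_le_of_lt le_rfl (lt_of_lt_of_le hN le_top)).ne
        exact (ENNReal.add_le_add_iff_right hfin).mp h2
    have hinter : (⋂ i, A i) = ⋂ n, B n := by
      apply Set.Subset.antisymm
      · exact Set.subset_iInter fun n =>
          fun x hx => Set.mem_iInter₂.mpr fun j _ => Set.mem_iInter.mp hx j
      · intro x hx
        refine Set.mem_iInter.mpr fun i => ?_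
        have := Set.mem_iInter.mp hx (i + 1)
        exact Set.mem_iInter₂.mp this i (Finset.self_mem_range_succ i)
    rw [hinter, Directed.measure_iInter (fun n => (hBm n).nullMeasurableSet)
      (hBanti.directed_ge) ⟨0, hBfin 0⟩]
    refine lt_of_lt_of_le ?_ (le_iInf hlow)
    exact ENNReal.mul_pos (hBpos N).ne' (tsub_pos_of_lt hN).ne'
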